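/- Every relatively weakly compact subset of the dual X' of a Banach space X is an L-Dunford-Pettis set. -/

import Mathlib

open Filter Topology Metric

noncomputable section

instance : Fact ((1:ENNReal) ≤ ⊤) := ⟨le_top⟩

/-- A sequence is weakly null if every continuous linear functional sends it to a null
sequence. -/
def WeaklyNull {X : Type*} [NormedAddCommGroup X] [NormedSpace ℝ X] (x : ℕ → X) : Prop :=
  ∀ f : X →L[ℝ] ℝ, Tendsto (fun n => f (x n)) atTop (𝓝 0)

/-- A sequence of functionals is weak*-null if it tends to zero pointwise. -/
def WeakStarNull {X : Type*} [NormedAddCommGroup X] [NormedSpace ℝ X]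
    (f : ℕ → X →L[ℝ] ℝ) : Prop :=
  ∀ x : X, Tendsto (fun n => f n x) atTop (𝓝 0)

/-- A norm bounded set is a Dunford-Pettis set if every weakly null sequence of functionals
converges to zero uniformly on it. -/
def IsDPSet {X : Type*} [NormedAddCommGroup X] [NormedSpace ℝ X] (A : Set X) : Prop :=
  Bornology.IsBounded A ∧
  ∀ f : ℕ → X →L[ℝ] ℝ, WeaklyNull f →
    Tendsto (fun n => ⨆ x : A, |f n (x : X)|) atTop (𝓝 0)

/-- A norm bounded subset of the dual is an L-set if every weakly null sequence in `X`
converges to zero uniformly on it. -/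
def IsLSet {X : Type*} [NormedAddCommGroup X] [NormedSpace ℝ X]
    (A : Set (X →L[ℝ] ℝ)) : Prop :=
  Bornology.IsBounded A ∧
  ∀ x : ℕ → X, WeaklyNull x →
    Tendsto (fun n => ⨆ f : A, |(f : X →L[ℝ] ℝ) (x n)|) atTop (𝓝 0)

/-- A norm bounded subset of the dual is an L-Dunford-Pettis set if every weakly null
sequence in `X` which is a Dunford-Pettis set converges to zero uniformly on it. -/
def IsLDPSet {X : Type*} [NormedAddCommGroup X] [NormedSpace ℝ X]
    (A : Set (X →L[ℝ] ℝ)) : Prop :=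
  Bornology.IsBounded A ∧
  ∀ x : ℕ → X, WeaklyNull x → IsDPSet (Set.range x) →
    Tendsto (fun n => ⨆ f : A, |(f : X →L[ℝ] ℝ) (x n)|) atTop (𝓝 0)

/-- A set is relatively weakly compact if its closure in the weak topology is compact. -/
def RelWeaklyCompact {X : Type*} [NormedAddCommGroup X] [NormedSpace ℝ X]
    (A : Set X) : Prop :=
  IsCompact (closure ((toWeakSpace ℝ X) '' A))

/-- The relatively compact Dunford-Pettis property: every Dunford-Pettis set is
relatively norm compact. -/
def HasDPrcP (X : Type*) [NormedAddCommGroup X] [NormedSpace ℝ X] : Prop :=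
  ∀ A : Set X, IsDPSet A → IsCompact (closure A)

/-- An operator is Dunford-Pettis completely continuous if it maps weakly null sequences
that are Dunford-Pettis sets to norm null sequences. -/
def IsDPcc {X Y : Type*} [NormedAddCommGroup X] [NormedSpace ℝ X]
    [NormedAddCommGroup Y] [NormedSpace ℝ Y] (T : X →L[ℝ] Y) : Prop :=
  ∀ x : ℕ → X, WeaklyNull x → IsDPSet (Set.range x) →
    Tendsto (fun n => ‖T (x n)‖) atTop (𝓝 0)

/-- An operator is weakly compact if the image of the closed unit ball is relatively
weakly compact. -/
def IsWeaklyCompactOp {X Y : Type*} [NormedAddCommGroup X] [NormedSpace ℝ X]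
    [NormedAddCommGroup Y] [NormedSpace ℝ Y] (T : X →L[ℝ] Y) : Prop :=
  RelWeaklyCompact (T '' closedBall 0 1)

/-- The L-Dunford-Pettis property: every L-Dunford-Pettis set in the dual is relatively
weakly compact. -/
def HasLDPProperty (X : Type*) [NormedAddCommGroup X] [NormedSpace ℝ X] : Prop :=
  ∀ A : Set (X →L[ℝ] ℝ), IsLDPSet A → RelWeaklyCompact A

/-- The Dunford-Pettis property: every relatively weakly compact set is a
Dunford-Pettis set. -/
def HasDPProperty (X : Type*) [NormedAddCommGroup X] [NormedSpace ℝ X] : Prop :=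
  ∀ A : Set X, RelWeaklyCompact A → IsDPSet A

/-- Grothendieck space: every weak*-null sequence in the dual is weakly null. -/
def IsGrothendieck (X : Type*) [NormedAddCommGroup X] [NormedSpace ℝ X] : Prop :=
  ∀ f : ℕ → X →L[ℝ] ℝ, WeakStarNull f → WeaklyNull f

/-- The space `ℓ∞` of bounded real sequences. -/
abbrev ellInfty : Type := lp (fun _ : ℕ => ℝ) ⊤

section Aux

open Set

/-- Separation lemma: if `h` is in the closure of the range of `g`, the `z (m,j)` are
near-norming vectors for `g m`, and `h` vanishes on all `z p`, then `h = 0`. -/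
lemma sep_aux {X : Type*} [NormedAddCommGroup X] [NormedSpace ℝ X]
    (g : ℕ → X →L[ℝ] ℝ) (z : ℕ × ℕ → X)
    (hz : ∀ m j : ℕ, ‖z (m, j)‖ ≤ 1 ∧ ‖g m‖ - 1 / (j + 1 : ℝ) < ‖g m (z (m, j))‖)
    (h : X →L[ℝ] ℝ) (hh : h ∈ closure (Set.range g)) (hz0 : ∀ p, h (z p) = 0) : h = 0 := by
  by_contra h0
  have hn : 0 < ‖h‖ := norm_pos_iff.mpr h0
  obtain ⟨b, hb, hdist⟩ := Metric.mem_closure_iff.mp hh (‖h‖ / 4) (by linarith)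
  obtain ⟨m, rfl⟩ := hb
  obtain ⟨j, hj⟩ := exists_nat_one_div_lt (show (0 : ℝ) < ‖h‖ / 4 by linarith)
  have hdist' : ‖g m - h‖ < ‖h‖ / 4 := by
    rw [dist_eq_norm] at hdist
    calc ‖g m - h‖ = ‖h - g m‖ := by rw [norm_sub_rev]
    _ < ‖h‖ / 4 := hdist
  have hgm : (3 : ℝ) / 4 * ‖h‖ < ‖g m‖ := by
    have := norm_sub_norm_le h (g m)
    rw [norm_sub_rev] at hdist'
    linarith
  have h1 : ‖g m (z (m, j))‖ = ‖(g m - h) (z (m, j))‖ := by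
    rw [ContinuousLinearMap.sub_apply, hz0 (m, j), sub_zero]
  have h2 : ‖(g m - h) (z (m, j))‖ ≤ ‖g m - h‖ := by
    calc ‖(g m - h) (z (m, j))‖ ≤ ‖g m - h‖ * ‖z (m, j)‖ := (g m - h).le_opNorm _
    _ ≤ ‖g m - h‖ * 1 := by
        have := (hz m j).1
        have := norm_nonneg (g m - h)
        nlinarith
    _ = ‖g m - h‖ := mul_one _
  have h3 := (hz m j).2
  have hjj : (1 : ℝ) / (j + 1) < ‖h‖ / 4 := hj
  linarith [h1 ▸ h3]

end Aux

set_option maxHeartbeats 1000000 in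
theorem stmt3 {X : Type*} [NormedAddCommGroup X] [NormedSpace ℝ X] [CompleteSpace X]
    (A : Set (X →L[ℝ] ℝ)) (hA : RelWeaklyCompact A) :
    IsLDPSet A := by
  classical
  -- continuity of evaluations on the weak space
  have hev : ∀ z : X, Continuous fun w : WeakSpace ℝ (X →L[ℝ] ℝ) =>
      ((toWeakSpace ℝ (X →L[ℝ] ℝ)).symm w) z :=
    fun z => WeakBilin.eval_continuous ((topDualPairing ℝ (X →L[ℝ] ℝ)).flip)
      (ContinuousLinearMap.apply ℝ ℝ z)
  have hev' : ∀ φ : (X →L[ℝ] ℝ) →L[ℝ] ℝ, Continuous fun w : WeakSpace ℝ (X →L[ℝ] ℝ) =>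
      φ ((toWeakSpace ℝ (X →L[ℝ] ℝ)).symm w) :=
    fun φ => WeakBilin.eval_continuous ((topDualPairing ℝ (X →L[ℝ] ℝ)).flip) φ
  -- Part 1 : A is norm bounded
  have hptbdd : ∀ z : X, ∃ C, ∀ f : A, ‖(f : X →L[ℝ] ℝ) z‖ ≤ C := by
    intro z
    have hc : IsCompact ((fun w : WeakSpace ℝ (X →L[ℝ] ℝ) =>
        ((toWeakSpace ℝ (X →L[ℝ] ℝ)).symm w) z) '' closure (toWeakSpace ℝ (X →L[ℝ] ℝ) '' A)) :=
      hA.image (hev z)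
    obtain ⟨C, hC⟩ := Metric.isBounded_iff_subset_closedBall (0 : ℝ) |>.mp hc.isBounded
    refine ⟨C, fun f => ?_⟩
    have hmem : ((toWeakSpace ℝ (X →L[ℝ] ℝ)).symm (toWeakSpace ℝ (X →L[ℝ] ℝ) f.1)) z ∈
        (fun w : WeakSpace ℝ (X →L[ℝ] ℝ) => ((toWeakSpace ℝ (X →L[ℝ] ℝ)).symm w) z) ''
          closure (toWeakSpace ℝ (X →L[ℝ] ℝ) '' A) :=
      ⟨_, subset_closure ⟨f.1, f.2, rfl⟩, rfl⟩
    have := hC hmem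
    rw [Metric.mem_closedBall, LinearEquiv.symm_apply_apply, Real.dist_0_eq_abs] at this
    simpa [Real.norm_eq_abs] using this
  obtain ⟨C', hC'⟩ := banach_steinhaus (g := fun f : A => (f : X →L[ℝ] ℝ)) hptbdd
  have hAbdd : Bornology.IsBounded A := by
    rw [isBounded_iff_forall_norm_le]
    exact ⟨C', fun f hf => hC' ⟨f, hf⟩⟩
  refine ⟨hAbdd, ?_⟩
  intro x hx hDP
  obtain ⟨M, hM⟩ := isBounded_iff_forall_norm_le.mp hDP.1
  by_contra hcon
  rw [Metric.tendsto_atTop] at hcon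
  push_neg at hcon
  obtain ⟨ε, hε, hfreq⟩ := hcon
  -- A is nonempty
  have hAne : A.Nonempty := by
    rcases A.eq_empty_or_nonempty with h | h
    · obtain ⟨n, -, hn⟩ := hfreq 0
      subst h
      haveI : IsEmpty (↥(∅ : Set (X →L[ℝ] ℝ))) := by simp
      rw [Real.iSup_of_isEmpty, Real.dist_0_eq_abs, abs_zero] at hn
      linarith
    · exact h
  haveI : Nonempty ↥A := hAne.to_subtype
  -- choose indices and functionals
  have hsel : ∀ N : ℕ, ∃ n, N ≤ n ∧ ε ≤ ⨆ f : A, |(f : X →L[ℝ] ℝ) (x n)| := by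
    intro N
    obtain ⟨n, hn1, hn2⟩ := hfreq N
    rw [Real.dist_0_eq_abs] at hn2
    refine ⟨n, hn1, ?_⟩
    have h0 : (0 : ℝ) ≤ ⨆ f : A, |(f : X →L[ℝ] ℝ) (x n)| :=
      Real.iSup_nonneg fun f => abs_nonneg _
    rwa [abs_of_nonneg h0] at hn2
  choose φn hφn1 hφn2 using hsel
  have hsel2 : ∀ k : ℕ, ∃ f : A, ε / 2 < |(f : X →L[ℝ] ℝ) (x (φn k))| := by
    intro k
    exact exists_lt_of_lt_ciSup (lt_of_lt_of_le (by linarith) (hφn2 k))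
  choose fk hfk using hsel2
  set F : ℕ → X →L[ℝ] ℝ := fun k => (fk k : X →L[ℝ] ℝ) with hF
  -- the separable subspace Y
  set Y : Submodule ℝ (X →L[ℝ] ℝ) := (Submodule.span ℝ (Set.range F)).topologicalClosure with hY
  have hYsep : TopologicalSpace.IsSeparable (Y : Set (X →L[ℝ] ℝ)) := by
    rw [hY, Submodule.topologicalClosure_coe]
    exact ((Set.countable_range F).isSeparable.span).closure
  obtain ⟨c, hccount, hcsub⟩ := hYsep
  have hcne : c.Nonempty := by
    rcases c.eq_empty_or_nonempty with h | h
    · exfalso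
      have h0 : (0 : X →L[ℝ] ℝ) ∈ (Y : Set (X →L[ℝ] ℝ)) := Y.zero_mem
      have := hcsub h0
      rw [h, closure_empty] at this
      exact this
    · exact h
  obtain ⟨g, hg⟩ := Set.Countable.exists_eq_range hccount hcne
  subst hg
  -- the norming vectors
  have hzsel : ∀ m j : ℕ, ∃ z : X, ‖z‖ ≤ 1 ∧ ‖g m‖ - 1 / (j + 1 : ℝ) < ‖g m z‖ := by
    intro m j
    have hr : ‖g m‖ - 1 / (j + 1 : ℝ) < ‖g m‖ := by
      have : (0 : ℝ) < 1 / (j + 1 : ℝ) := by positivity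
      linarith
    obtain ⟨z, hz1, hz2⟩ := (g m).exists_lt_apply_of_lt_opNorm hr
    exact ⟨z, hz1.le, hz2⟩
  choose z hz1 hz2 using fun p : ℕ × ℕ => hzsel p.1 p.2
  -- the compact set S
  set S : Set (WeakSpace ℝ (X →L[ℝ] ℝ)) :=
    closure (toWeakSpace ℝ (X →L[ℝ] ℝ) '' (A ∩ (Y : Set (X →L[ℝ] ℝ)))) with hSdef
  have hS : IsCompact S :=
    hA.of_isClosed_subset isClosed_closure
      (closure_mono (Set.image_mono Set.inter_subset_left))
  have hYclosed : IsClosed (toWeakSpace ℝ (X →L[ℝ] ℝ) '' (Y : Set (X →L[ℝ] ℝ))) := by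
    have hconv : Convex ℝ (Y : Set (X →L[ℝ] ℝ)) := Y.convex
    have h1 := hconv.toWeakSpace_closure (𝕜 := ℝ)
    rw [(Submodule.isClosed_topologicalClosure _).closure_eq] at h1
    rw [h1]
    exact isClosed_closure
  have hSY : S ⊆ toWeakSpace ℝ (X →L[ℝ] ℝ) '' (Y : Set (X →L[ℝ] ℝ)) :=
    closure_minimal (Set.image_mono Set.inter_subset_right) hYclosed
  haveI : CompactSpace ↥S := isCompact_iff_compactSpace.mp hS
  -- the injection into a metrizable space
  set Φ : ↥S → (ℕ × ℕ → ℝ) :=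
    fun w p => ((toWeakSpace ℝ (X →L[ℝ] ℝ)).symm w.1) (z p) with hΦ
  have hΦc : Continuous Φ :=
    continuous_pi fun p => (hev (z p)).comp continuous_subtype_val
  have hΦi : Function.Injective Φ := by
    intro s t hst
    obtain ⟨fs, hfsY, hfs⟩ := hSY s.2
    obtain ⟨ft, hftY, hft⟩ := hSY t.2
    have hfs' : (toWeakSpace ℝ (X →L[ℝ] ℝ)).symm s.1 = fs := by
      rw [← hfs, LinearEquiv.symm_apply_apply]
    have hft' : (toWeakSpace ℝ (X →L[ℝ] ℝ)).symm t.1 = ft := by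
      rw [← hft, LinearEquiv.symm_apply_apply]
    have hzero : ∀ p, (fs - ft) (z p) = 0 := by
      intro p
      have := congrFun hst p
      rw [hΦ] at this
      simp only [hfs', hft'] at this
      simp [ContinuousLinearMap.sub_apply, this]
    have hmem : fs - ft ∈ closure (Set.range g) :=
      hcsub (Y.sub_mem hfsY hftY)
    have h0 : fs - ft = 0 := sep_aux g z (fun m j => ⟨hz1 (m, j), hz2 (m, j)⟩) _ hmem hzero
    have : fs = ft := by
      have := sub_eq_zero.mp h0
      exact this
    apply Subtype.ext
    rw [← hfs, ← hft, this]
  have hemb := hΦc.isClosedEmbedding hΦi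
  haveI : FirstCountableTopology ↥S :=
    hemb.toIsEmbedding.firstCountableTopology
  -- the sequence in S
  have hmemS : ∀ k, toWeakSpace ℝ (X →L[ℝ] ℝ) (F k) ∈ S := by
    intro k
    refine subset_closure ⟨F k, ⟨(fk k).2, ?_⟩, rfl⟩
    exact Submodule.le_topologicalClosure _ (Submodule.subset_span (Set.mem_range_self k))
  set σ : ℕ → ↥S := fun k => ⟨toWeakSpace ℝ (X →L[ℝ] ℝ) (F k), hmemS k⟩ with hσ
  obtain ⟨a, ψ, hψ, hconv⟩ := CompactSpace.tendsto_subseq σ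
  set f₀ : X →L[ℝ] ℝ := (toWeakSpace ℝ (X →L[ℝ] ℝ)).symm a.1 with hf₀
  -- the shifted sequence is weakly null
  have hgnull : WeaklyNull (fun j => F (ψ j) - f₀) := by
    intro φ
    have hφc : Continuous fun w : ↥S => φ ((toWeakSpace ℝ (X →L[ℝ] ℝ)).symm w.1) :=
      (hev' φ).comp continuous_subtype_val
    have h1 : Tendsto (fun j => φ ((toWeakSpace ℝ (X →L[ℝ] ℝ)).symm ((σ (ψ j)).1)))
        atTop (𝓝 (φ ((toWeakSpace ℝ (X →L[ℝ] ℝ)).symm a.1))) :=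
      (hφc.tendsto a).comp hconv
    have h2 : Tendsto (fun j => φ (F (ψ j))) atTop (𝓝 (φ f₀)) := by
      convert h1 using 2 with j
      rfl
    have := h2.sub (tendsto_const_nhds (x := φ f₀))
    simpa [map_sub] using this
  -- use the DP property
  have hsup := hDP.2 _ hgnull
  have hbdd : ∀ j : ℕ, BddAbove (Set.range fun y : Set.range x =>
      |(F (ψ j) - f₀) (y : X)|) := by
    intro j
    refine ⟨‖F (ψ j) - f₀‖ * M, ?_⟩
    rintro r ⟨y, rfl⟩
    calc |(F (ψ j) - f₀) (y : X)| ≤ ‖F (ψ j) - f₀‖ * ‖(y : X)‖ := (F (ψ j) - f₀).le_opNorm _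
    _ ≤ ‖F (ψ j) - f₀‖ * M := by
        have := hM _ y.2
        have := norm_nonneg (F (ψ j) - f₀)
        nlinarith
  have hle : ∀ j, |(F (ψ j) - f₀) (x (φn (ψ j)))| ≤
      ⨆ y : Set.range x, |(F (ψ j) - f₀) (y : X)| := by
    intro j
    exact le_ciSup (hbdd j) ⟨x (φn (ψ j)), Set.mem_range_self _⟩
  have htend1 : Tendsto (fun j => |(F (ψ j) - f₀) (x (φn (ψ j)))|) atTop (𝓝 0) :=
    squeeze_zero (fun j => abs_nonneg _) hle hsup
  have hφψ : Tendsto (fun j => φn (ψ j)) atTop atTop :=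
    tendsto_atTop_mono (fun j => (hψ.id_le j).trans (hφn1 (ψ j))) tendsto_id
  have htend2 : Tendsto (fun j => |f₀ (x (φn (ψ j)))|) atTop (𝓝 0) := by
    have := ((hx f₀).comp hφψ).abs
    simpa using this
  have htotal : Tendsto (fun j => |(F (ψ j) - f₀) (x (φn (ψ j)))| + |f₀ (x (φn (ψ j)))|)
      atTop (𝓝 0) := by
    have := htend1.add htend2
    simpa using this
  have hev2 : ∀ᶠ j in atTop,
      |(F (ψ j) - f₀) (x (φn (ψ j)))| + |f₀ (x (φn (ψ j)))| < ε / 2 :=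
    htotal.eventually (gt_mem_nhds (by linarith))
  obtain ⟨j, hj⟩ := hev2.exists
  have hcontra : ε / 2 < |F (ψ j) (x (φn (ψ j)))| := hfk (ψ j)
  have hsplit : |F (ψ j) (x (φn (ψ j)))| ≤
      |(F (ψ j) - f₀) (x (φn (ψ j)))| + |f₀ (x (φn (ψ j)))| := by
    have : F (ψ j) (x (φn (ψ j))) =
        (F (ψ j) - f₀) (x (φn (ψ j))) + f₀ (x (φn (ψ j))) := by
      simp [ContinuousLinearMap.sub_apply]
    rw [this]
    exact abs_add_le _ _
  linarith
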